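/- The number of labelled graphs on vertex set {1, ..., n} whose vertices admit a similarity class of size at least n − c is at most binom(n, c) · 2^{binom(c+1, 2) + 1}. -/

import Mathlib

/-- Two vertices are similar if no third vertex is adjacent to exactly one of them. -/
def GraphSimilar {V : Type} (G : SimpleGraph V) (x y : V) : Prop :=
  ∀ z, z ≠ x → z ≠ y → (G.Adj z x ↔ G.Adj z y)

private lemma orderIsoOfFin_congr {α} [LinearOrder α] {s t : Finset α} (h : s = t) {k : ℕ}
    (hs : s.card = k) (ht : t.card = k) (i : Fin k) :
    (s.orderIsoOfFin hs i : α) = (t.orderIsoOfFin ht i : α) := by subst h; rfl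

private lemma adj_transfer {n : ℕ} (G : SimpleGraph (Fin n)) (S : Finset (Fin n))
    (hsim : ∀ x ∈ S, ∀ y ∈ S, GraphSimilar G x y)
    {x y u v : Fin n} (hx : x ∈ S) (hy : y ∈ S) (hu : u ∈ S) (hv : v ∈ S)
    (hxy : G.Adj x y) (huv : u ≠ v) : G.Adj u v := by
  have claim1 : ∀ w ∈ S, w ≠ x → G.Adj x w := by
    intro w hw hwx
    by_cases hwy : w = y
    · subst hwy; exact hxy
    · exact ((hsim y hy w hw) x hxy.ne (Ne.symm hwx)).mp hxy
  by_cases hux : u = x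
  · subst hux; exact claim1 v hv (Ne.symm huv)
  · by_cases hvx : v = x
    · subst hvx; exact (claim1 u hu hux).symm
    · have hxv : G.Adj x v := claim1 v hv hvx
      exact (((hsim x hx u hu) v hvx (Ne.symm huv)).mp hxv.symm).symm

theorem count_graphs_with_large_similarity_class (n c : ℕ) (hc : c ≤ n) :
    Nat.card {G : SimpleGraph (Fin n) //
        ∃ S : Finset (Fin n), n - c ≤ S.card ∧ ∀ x ∈ S, ∀ y ∈ S, GraphSimilar G x y}
      ≤ Nat.choose n c * 2 ^ (Nat.choose (c + 1) 2 + 1) := by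
  classical
  set α := {G : SimpleGraph (Fin n) //
      ∃ S : Finset (Fin n), n - c ≤ S.card ∧ ∀ x ∈ S, ∀ y ∈ S, GraphSimilar G x y} with hα
  have hdata : ∀ G : α, ∃ S : Finset (Fin n),
      S.card = n - c ∧ ∀ x ∈ S, ∀ y ∈ S, GraphSimilar G.1 x y := by
    rintro ⟨G, S, hcard, hsim⟩
    obtain ⟨S', hsub, hcard'⟩ := Finset.exists_subset_card_eq hcard
    exact ⟨S', hcard', fun x hx y hy => hsim x (hsub hx) y (hsub hy)⟩
  choose S hScard hSsim using hdata
  have hTcard : ∀ G : α, (S G)ᶜ.card = c := by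
    intro G
    rw [Finset.card_compl, hScard G, Fintype.card_fin]
    omega
  let g : α → Fin n → Fin n → Bool := fun G a b =>
    if a = b then decide (∃ x ∈ S G, G.1.Adj a x) else decide (G.1.Adj a b)
  have hgsymm : ∀ (G : α) (a b : Fin n), g G a b = g G b a := by
    intro G a b
    by_cases h : a = b
    · subst h; rfl
    · simp only [g, if_neg h, if_neg (Ne.symm h)]
      simp [SimpleGraph.adj_comm]
  let e : ∀ G : α, Fin c → Fin n := fun G i => ((S G)ᶜ.orderIsoOfFin (hTcard G) i : Fin n)
  let F : α → ({T : Finset (Fin n) // T.card = c} × (Sym2 (Fin c) → Bool) × Bool) :=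
    fun G => (⟨(S G)ᶜ, hTcard G⟩,
      Sym2.lift ⟨fun i j => g G (e G i) (e G j), fun i j => hgsymm G (e G i) (e G j)⟩,
      decide (∃ x ∈ S G, ∃ y ∈ S G, x ≠ y ∧ G.1.Adj x y))
  have hinj : Function.Injective F := by
    intro G₁ G₂ hFeq
    have hTeq : (S G₁)ᶜ = (S G₂)ᶜ := congrArg (fun p => p.1.1) hFeq
    have hSeq : S G₁ = S G₂ := by
      have := congrArg (·ᶜ) hTeq; simpa using this
    have heeq : ∀ i, e G₁ i = e G₂ i := fun i =>
      orderIsoOfFin_congr hTeq (hTcard G₁) (hTcard G₂) i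
    have hbeq : ((∃ x ∈ S G₁, ∃ y ∈ S G₁, x ≠ y ∧ G₁.1.Adj x y)
        ↔ (∃ x ∈ S G₂, ∃ y ∈ S G₂, x ≠ y ∧ G₂.1.Adj x y)) := by
      have := congrArg (fun p => p.2.2) hFeq
      simpa [F, decide_eq_decide] using this
    have hfeq : ∀ i j : Fin c, g G₁ (e G₁ i) (e G₁ j) = g G₂ (e G₂ i) (e G₂ j) := by
      intro i j
      have := congrFun (congrArg (fun p => p.2.1) hFeq) s(i, j)
      simpa [F] using this
    have hg' : ∀ t ∈ (S G₁)ᶜ, ∀ u ∈ (S G₁)ᶜ, g G₁ t u = g G₂ t u := by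
      intro t ht u hu
      obtain ⟨i, hi⟩ : ∃ i, e G₁ i = t :=
        ⟨((S G₁)ᶜ.orderIsoOfFin (hTcard G₁)).symm ⟨t, ht⟩, by
          simp [e, ← Finset.coe_orderIsoOfFin_apply]⟩
      obtain ⟨j, hj⟩ : ∃ j, e G₁ j = u :=
        ⟨((S G₁)ᶜ.orderIsoOfFin (hTcard G₁)).symm ⟨u, hu⟩, by
          simp [e, ← Finset.coe_orderIsoOfFin_apply]⟩
      have h2 := hfeq i j
      rw [← heeq i, ← heeq j, hi, hj] at h2
      exact h2
    -- helper : adjacency of an outside vertex to S is determined by the diagonal existential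
    have key : ∀ (G : α) (w v : Fin n), w ∈ S G → v ∉ S G →
        (G.1.Adj v w ↔ ∃ x ∈ S G, G.1.Adj v x) := by
      intro G w v hw hv'
      constructor
      · intro h; exact ⟨w, hw, h⟩
      · rintro ⟨x, hx, hadj⟩
        exact ((hSsim G) x hx w hw v (fun h => hv' (h ▸ hx)) (fun h => hv' (h ▸ hw))).mp hadj
    apply Subtype.ext
    ext u v
    by_cases hu : u ∈ S G₁ <;> by_cases hv : v ∈ S G₁
    · -- both in S : use the global bit
      constructor <;> intro hadj
      · obtain ⟨x, hx, y, hy, hxy, hadjxy⟩ := hbeq.mp ⟨u, hu, v, hv, hadj.ne, hadj⟩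
        exact adj_transfer G₂.1 (S G₂) (hSsim G₂) hx hy (hSeq ▸ hu) (hSeq ▸ hv) hadjxy hadj.ne
      · obtain ⟨x, hx, y, hy, hxy, hadjxy⟩ := hbeq.mpr ⟨u, hSeq ▸ hu, v, hSeq ▸ hv, hadj.ne, hadj⟩
        exact adj_transfer G₁.1 (S G₁) (hSsim G₁) hx hy hu hv hadjxy hadj.ne
    · -- u ∈ S, v ∉ S : use diagonal at v
      have hgd := hg' v (Finset.mem_compl.mpr hv) v (Finset.mem_compl.mpr hv)
      simp only [g, if_pos rfl, decide_eq_decide] at hgd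
      have hv2 : v ∉ S G₂ := hSeq ▸ hv
      have k1 := key G₁ u v hu hv
      have k2 := key G₂ u v (hSeq ▸ hu) hv2
      constructor <;> intro hadj
      · exact (k2.mpr (hgd.mp (k1.mp hadj.symm))).symm
      · exact (k1.mpr (hgd.mpr (k2.mp hadj.symm))).symm
    · -- u ∉ S, v ∈ S
      have hgd := hg' u (Finset.mem_compl.mpr hu) u (Finset.mem_compl.mpr hu)
      simp only [g, if_pos rfl, decide_eq_decide] at hgd
      have hu2 : u ∉ S G₂ := hSeq ▸ hu
      have k1 := key G₁ v u hv hu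
      have k2 := key G₂ v u (hSeq ▸ hv) hu2
      constructor <;> intro hadj
      · exact k2.mpr (hgd.mp (k1.mp hadj))
      · exact k1.mpr (hgd.mpr (k2.mp hadj))
    · -- both in complement
      by_cases huv : u = v
      · subst huv; simp
      · have hgd := hg' u (Finset.mem_compl.mpr hu) v (Finset.mem_compl.mpr hv)
        simp only [g, if_neg huv, decide_eq_decide] at hgd
        exact hgd
  have hcard := Nat.card_le_card_of_injective F hinj
  refine hcard.trans ?_
  have : Nat.card ({T : Finset (Fin n) // T.card = c} × (Sym2 (Fin c) → Bool) × Bool)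
      = Nat.choose n c * 2 ^ (Nat.choose (c + 1) 2 + 1) := by
    rw [Nat.card_eq_fintype_card]
    rw [Fintype.card_prod, Fintype.card_prod, Fintype.card_finset_len,
      Fintype.card_fun, Fintype.card_bool, Sym2.card, Fintype.card_fin, Fintype.card_fin,
      pow_succ]
  rw [this]
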